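/- Let u ∈ {0,1}^T and let Ψ₁, Ψ₀ ⊆ ℝ^T be compact sets. The bilevel quantity d_pos = max_{u ∈ {0,1}^T, u≠0} ( max_{P₁ ∈ Ψ₁} uᵀP₁ − max_{P₀ ∈ Ψ₀} uᵀP₀ ) satisfies: d_pos > 0 or d_neg = max_{u} ( min_{P₀ ∈ Ψ₀} uᵀP₀ − min_{P₁ ∈ Ψ₁} uᵀP₁ ) > 0 holds if and only if there exists a nonzero binary u with Ψ₁ ⊄ {P | min_{Ψ₀} uᵀP ≤ uᵀP ≤ max_{Ψ₀} uᵀP}. In particular, if Ψ₀ is exactly the polytope {P | min_{Ψ₀} uᵀP ≤ uᵀP ≤ max_{Ψ₀} uᵀP, ∀ nonzero u ∈ {0,1}^T}, then max{d_pos, d_neg} ≤ 0 if and only if Ψ₁ ⊆ Ψ₀. -/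
import Mathlib


/-- `u` is a binary vector: each component is 0 or 1. -/
def IsBinaryVec {T : ℕ} (u : Fin T → ℝ) : Prop := ∀ t, u t = 0 ∨ u t = 1

/-- The slab `{P | min_{Ψ₀} uᵀP ≤ uᵀP ≤ max_{Ψ₀} uᵀP}` of `Ψ₀` in direction `u`. -/
noncomputable def dirSlab {T : ℕ} (Ψ₀ : Set (Fin T → ℝ)) (u : Fin T → ℝ) :
    Set (Fin T → ℝ) :=
  {P | sInf ((fun Q => ∑ t, u t * Q t) '' Ψ₀) ≤ ∑ t, u t * P t ∧
       ∑ t, u t * P t ≤ sSup ((fun Q => ∑ t, u t * Q t) '' Ψ₀)}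

private lemma contf {T : ℕ} (u : Fin T → ℝ) :
    Continuous (fun Q : Fin T → ℝ => ∑ t, u t * Q t) := by
  exact continuous_finset_sum _ fun t _ => (continuous_const.mul (continuous_apply t))

private lemma slab_iff {T : ℕ} {Ψ₀ Ψ₁ : Set (Fin T → ℝ)}
    (h₀ne : Ψ₀.Nonempty) (h₀cpt : IsCompact Ψ₀)
    (h₁ne : Ψ₁.Nonempty) (h₁cpt : IsCompact Ψ₁) (u : Fin T → ℝ) :
    Ψ₁ ⊆ dirSlab Ψ₀ u ↔
      (sSup ((fun P => ∑ t, u t * P t) '' Ψ₁) ≤ sSup ((fun P => ∑ t, u t * P t) '' Ψ₀) ∧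
       sInf ((fun P => ∑ t, u t * P t) '' Ψ₀) ≤ sInf ((fun P => ∑ t, u t * P t) '' Ψ₁)) := by
  set f : (Fin T → ℝ) → ℝ := fun P => ∑ t, u t * P t with hf
  have h₁icpt : IsCompact (f '' Ψ₁) := h₁cpt.image (contf u)
  have h₁ine : (f '' Ψ₁).Nonempty := h₁ne.image f
  constructor
  · intro hsub
    constructor
    · apply csSup_le h₁ine
      rintro y ⟨P, hP, rfl⟩
      exact (hsub hP).2
    · apply le_csInf h₁ine
      rintro y ⟨P, hP, rfl⟩
      exact (hsub hP).1
  · rintro ⟨hS, hI⟩ P hP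
    exact ⟨hI.trans (csInf_le h₁icpt.bddBelow ⟨P, hP, rfl⟩),
      (le_csSup h₁icpt.bddAbove ⟨P, hP, rfl⟩).trans hS⟩

/-- `d_pos > 0 ∨ d_neg > 0` (i.e., some nonzero binary direction has a
positive gap) iff there is a nonzero binary `u` with `Ψ₁ ⊄` the `u`-slab of `Ψ₀`; and if
`Ψ₀` equals the polytope of all its binary-direction slabs (the EAM property), then
`max{d_pos, d_neg} ≤ 0` iff `Ψ₁ ⊆ Ψ₀`. -/
theorem stmt13 {T : ℕ} (Ψ₀ Ψ₁ : Set (Fin T → ℝ))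
    (h₀ne : Ψ₀.Nonempty) (h₀cpt : IsCompact Ψ₀) (h₀conv : Convex ℝ Ψ₀)
    (h₁ne : Ψ₁.Nonempty) (h₁cpt : IsCompact Ψ₁) (h₁conv : Convex ℝ Ψ₁) :
    ((∃ u : Fin T → ℝ, IsBinaryVec u ∧ u ≠ 0 ∧
        (sSup ((fun P => ∑ t, u t * P t) '' Ψ₀) < sSup ((fun P => ∑ t, u t * P t) '' Ψ₁) ∨
         sInf ((fun P => ∑ t, u t * P t) '' Ψ₁) < sInf ((fun P => ∑ t, u t * P t) '' Ψ₀))) ↔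
      (∃ u : Fin T → ℝ, IsBinaryVec u ∧ u ≠ 0 ∧ ¬ Ψ₁ ⊆ dirSlab Ψ₀ u)) ∧
    (Ψ₀ = {P | ∀ u : Fin T → ℝ, IsBinaryVec u → u ≠ 0 → P ∈ dirSlab Ψ₀ u} →
      ((∀ u : Fin T → ℝ, IsBinaryVec u → u ≠ 0 →
          sSup ((fun P => ∑ t, u t * P t) '' Ψ₁) ≤ sSup ((fun P => ∑ t, u t * P t) '' Ψ₀) ∧
          sInf ((fun P => ∑ t, u t * P t) '' Ψ₀) ≤ sInf ((fun P => ∑ t, u t * P t) '' Ψ₁)) ↔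
        Ψ₁ ⊆ Ψ₀)) := by
  have key := fun u => slab_iff h₀ne h₀cpt h₁ne h₁cpt (Ψ₁ := Ψ₁) u
  constructor
  · apply exists_congr; intro u
    apply and_congr_right'; apply and_congr_right'
    rw [key u, not_and_or, not_le, not_le]
  · intro hEAM
    constructor
    · intro h P hP
      rw [hEAM]
      intro u hb hne
      exact (key u).mpr (h u hb hne) hP
    · intro hsub u hb hne
      apply (key u).mp
      intro P hP
      have hP0 : P ∈ Ψ₀ := hsub hP
      exact ⟨csInf_le (h₀cpt.image (contf u)).bddBelow ⟨P, hP0, rfl⟩,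
        le_csSup (h₀cpt.image (contf u)).bddAbove ⟨P, hP0, rfl⟩⟩
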